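/- arXiv:1510.00793 — 4 statements merged into one kernel-verified Lean document; each statement's English description precedes it below -/
import Mathlib

section
/- Let {α, S₀, ϑ1, ϑ2} be an admissible quadruple of order n such that the pair {α, ϑ1} is controllable. Then every eigenvalue λ of α satisfies Im λ > 0. -/
open Matrix Filter
open scoped ComplexOrder

noncomputable section

/-- The pair `{α, ϑ}` is controllable: the columns of `ϑ, αϑ, …, α^(n−1)ϑ` span `ℂⁿ`. -/
def Controllable {n m : ℕ} (α : Matrix (Fin n) (Fin n) ℂ)
    (ϑ : Matrix (Fin n) (Fin m) ℂ) : Prop :=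
  Submodule.span ℂ
    {v : Fin n → ℂ | ∃ k < n, ∃ c : Fin m, v = fun r => (α ^ k * ϑ) r c} = ⊤

/-- `j = diag(I_{m1}, −I_{m2})`. -/
def jmat (m1 m2 : ℕ) : Matrix (Fin m1 ⊕ Fin m2) (Fin m1 ⊕ Fin m2) ℂ :=
  Matrix.fromBlocks 1 0 0 (-1)

/-- The quadruple `{α, S₀, ϑ1, ϑ2}` is admissible: `S₀ > 0` and
`α S₀ − S₀ α* = i(ϑ1 ϑ1* + ϑ2 ϑ2*)`. -/
def Admissible {n m1 m2 : ℕ} (α S₀ : Matrix (Fin n) (Fin n) ℂ)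
    (ϑ1 : Matrix (Fin n) (Fin m1) ℂ) (ϑ2 : Matrix (Fin n) (Fin m2) ℂ) : Prop :=
  S₀.PosDef ∧ α * S₀ - S₀ * αᴴ = Complex.I • (ϑ1 * ϑ1ᴴ + ϑ2 * ϑ2ᴴ)

/-- Every eigenvalue of `α` from an admissible quadruple with `{α, ϑ1}` controllable
lies in the open upper half-plane. -/
theorem spectrum_subset_upper_halfPlane {n m1 m2 : ℕ}
    (α S₀ : Matrix (Fin n) (Fin n) ℂ)
    (ϑ1 : Matrix (Fin n) (Fin m1) ℂ) (ϑ2 : Matrix (Fin n) (Fin m2) ℂ)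
    (hadm : Admissible α S₀ ϑ1 ϑ2) (hc : Controllable α ϑ1) :
    ∀ lam ∈ spectrum ℂ α, 0 < lam.im := by
  obtain ⟨hS, heq⟩ := hadm
  intro lam hlam
  -- extract a left eigenvector: αᴴ *ᵥ v = star lam • v with v ≠ 0
  have hdet : (lam • (1 : Matrix (Fin n) (Fin n) ℂ) - α).det = 0 := by
    rw [spectrum.mem_iff, Algebra.algebraMap_eq_smul_one] at hlam
    by_contra h
    exact hlam ((Matrix.isUnit_iff_isUnit_det _).mpr (isUnit_iff_ne_zero.mpr h))
  have hdetH : ((lam • (1 : Matrix (Fin n) (Fin n) ℂ) - α)ᴴ).det = 0 := by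
    rw [Matrix.det_conjTranspose, hdet, star_zero]
  obtain ⟨v, hv0, hv⟩ := (Matrix.exists_mulVec_eq_zero_iff).mpr hdetH
  have hαv : αᴴ *ᵥ v = star lam • v := by
    have h1 : (lam • (1 : Matrix (Fin n) (Fin n) ℂ) - α)ᴴ
        = star lam • (1 : Matrix (Fin n) (Fin n) ℂ) - αᴴ := by
      rw [Matrix.conjTranspose_sub, Matrix.conjTranspose_smul, Matrix.conjTranspose_one]
    rw [h1, Matrix.sub_mulVec, Matrix.smul_mulVec, Matrix.one_mulVec,
      sub_eq_zero] at hv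
    exact hv.symm
  -- left action of α on star v
  have hleft : star v ᵥ* α = lam • star v := by
    have := Matrix.star_mulVec αᴴ v
    rw [Matrix.conjTranspose_conjTranspose, hαv, star_smul, star_star] at this
    exact this.symm
  set Q : ℂ := star v ⬝ᵥ (S₀ *ᵥ v) with hQdef
  have hQ : 0 < Q := hS.dotProduct_mulVec_pos hv0
  have hQre : 0 < Q.re ∧ Q.im = 0 := by
    rw [Complex.lt_def] at hQ
    exact ⟨by simpa using hQ.1, by simpa using hQ.2.symm⟩
  set u1 : Fin m1 → ℂ := ϑ1ᴴ *ᵥ v with hu1def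
  set u2 : Fin m2 → ℂ := ϑ2ᴴ *ᵥ v with hu2def
  have hvϑ1 : star v ᵥ* ϑ1 = star u1 := by
    have := Matrix.star_mulVec ϑ1ᴴ v
    rw [Matrix.conjTranspose_conjTranspose] at this
    exact this.symm
  have hvϑ2 : star v ᵥ* ϑ2 = star u2 := by
    have := Matrix.star_mulVec ϑ2ᴴ v
    rw [Matrix.conjTranspose_conjTranspose] at this
    exact this.symm
  set a1 : ℂ := star u1 ⬝ᵥ u1 with ha1def
  set a2 : ℂ := star u2 ⬝ᵥ u2 with ha2def
  -- main identity: (lam - star lam) * Q = I * (a1 + a2)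
  have hmain : (lam - star lam) * Q = Complex.I * (a1 + a2) := by
    have h := congrArg (fun M => star v ⬝ᵥ (M *ᵥ v)) heq
    have hl : star v ⬝ᵥ ((α * S₀ - S₀ * αᴴ) *ᵥ v) = (lam - star lam) * Q := by
      rw [Matrix.sub_mulVec, dotProduct_sub, ← Matrix.mulVec_mulVec,
        ← Matrix.mulVec_mulVec, Matrix.dotProduct_mulVec (star v) α,
        hleft, hαv, Matrix.mulVec_smul, dotProduct_smul,
        smul_dotProduct]
      rw [smul_eq_mul, smul_eq_mul, ← hQdef]
      ring
    have hr : star v ⬝ᵥ ((Complex.I • (ϑ1 * ϑ1ᴴ + ϑ2 * ϑ2ᴴ)) *ᵥ v)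
        = Complex.I * (a1 + a2) := by
      rw [Matrix.smul_mulVec, dotProduct_smul, smul_eq_mul]
      congr 1
      rw [Matrix.add_mulVec, dotProduct_add, ← Matrix.mulVec_mulVec,
        ← Matrix.mulVec_mulVec, Matrix.dotProduct_mulVec (star v) ϑ1,
        Matrix.dotProduct_mulVec (star v) ϑ2, hvϑ1, hvϑ2]
    rw [hl, hr] at h
    exact h
  have hI : lam - star lam = ((2 * lam.im : ℝ) : ℂ) * Complex.I := by
    simpa using Complex.sub_conj lam
  have hmain2 : ((2 * lam.im : ℝ) : ℂ) * Q = a1 + a2 := by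
    have := hmain
    rw [hI] at this
    apply mul_left_cancel₀ Complex.I_ne_zero
    rw [← this]; ring
  have ha1 : (0 : ℂ) ≤ a1 := dotProduct_star_self_nonneg u1
  have ha2 : (0 : ℂ) ≤ a2 := dotProduct_star_self_nonneg u2
  have ha1re : 0 ≤ a1.re ∧ a1.im = 0 := by
    rw [Complex.le_def] at ha1
    exact ⟨by simpa using ha1.1, by simpa using ha1.2.symm⟩
  have ha2re : 0 ≤ a2.re ∧ a2.im = 0 := by
    rw [Complex.le_def] at ha2
    exact ⟨by simpa using ha2.1, by simpa using ha2.2.symm⟩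
  -- take real parts
  have hre : 2 * lam.im * Q.re = a1.re + a2.re := by
    have := congrArg Complex.re hmain2
    simpa [Complex.mul_re, hQre.2] using this
  rcases lt_or_ge 0 lam.im with h | h
  · exact h
  -- if Im lam ≤ 0, then a1 = 0, contradicting controllability
  exfalso
  have hsum : a1.re + a2.re ≤ 0 := by
    rw [← hre]
    have : 2 * lam.im ≤ 0 := by linarith
    exact mul_nonpos_of_nonpos_of_nonneg this hQre.1.le
  have ha1z : a1 = 0 := by
    have h1 : a1.re = 0 := by linarith [ha1re.1, ha2re.1]
    exact Complex.ext h1 ha1re.2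
  have hu1z : u1 = 0 := dotProduct_star_self_eq_zero.mp ha1z
  -- powers
  have hpow : ∀ k : ℕ, star v ᵥ* α ^ k = lam ^ k • star v := by
    intro k
    induction k with
    | zero => simp [Matrix.vecMul_one]
    | succ k ih =>
      rw [pow_succ, ← Matrix.vecMul_vecMul, ih, Matrix.smul_vecMul, hleft,
        smul_smul, pow_succ]
  -- every generator is orthogonal to star v
  have hgen : ∀ w ∈ {w : Fin n → ℂ | ∃ k < n, ∃ c : Fin m1,
      w = fun r => (α ^ k * ϑ1) r c}, star v ⬝ᵥ w = 0 := by
    rintro w ⟨k, -, c, rfl⟩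
    have hw : (fun r => (α ^ k * ϑ1) r c) = (α ^ k * ϑ1) *ᵥ Pi.single c 1 := by
      rw [Matrix.mulVec_single]
      simp
      rfl
    rw [hw, Matrix.dotProduct_mulVec, ← Matrix.vecMul_vecMul, hpow,
      Matrix.smul_vecMul, hvϑ1, hu1z]
    simp
  have hall : ∀ w ∈ Submodule.span ℂ {w : Fin n → ℂ | ∃ k < n, ∃ c : Fin m1,
      w = fun r => (α ^ k * ϑ1) r c}, star v ⬝ᵥ w = 0 := by
    intro w hw
    induction hw using Submodule.span_induction with
    | mem x hx => exact hgen x hx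
    | zero => simp
    | add x y _ _ hx hy => rw [dotProduct_add, hx, hy, add_zero]
    | smul c x _ hx => rw [dotProduct_smul, hx, smul_zero]
  have hv2 : star v ⬝ᵥ v = 0 := by
    apply hall
    rw [hc]
    trivial
  exact hv0 (dotProduct_star_self_eq_zero.mp hv2)

end
end

section
/- Let {α, S₀, ϑ1, ϑ2} be an admissible quadruple of order n such that 0 ∉ σ(α) and i ∉ σ(α) (σ denoting the spectrum). Then the matrices S_k defined recursively by S_0 := S₀, S_{k+1} := S_k + α^{−1} S_k (α*)^{−1} + α^{−1} Λ_k j Λ_k* (α*)^{−1} are Hermitian positive definite for every k ∈ ℕ₀; in particular the quadruple generates a well-defined potential {C_k}. -/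
open Matrix Filter
open scoped ComplexOrder

noncomputable section

/-- `Λ_0 = [ϑ1, ϑ2]`, `Λ_{k+1} = Λ_k + i α⁻¹ Λ_k j`. -/
def LamSeq {n m1 m2 : ℕ} (α : Matrix (Fin n) (Fin n) ℂ)
    (ϑ1 : Matrix (Fin n) (Fin m1) ℂ) (ϑ2 : Matrix (Fin n) (Fin m2) ℂ) :
    ℕ → Matrix (Fin n) (Fin m1 ⊕ Fin m2) ℂ
  | 0 => Matrix.fromCols ϑ1 ϑ2
  | k + 1 => LamSeq α ϑ1 ϑ2 k + Complex.I • (α⁻¹ * LamSeq α ϑ1 ϑ2 k * jmat m1 m2)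

/-- `S_0 = S₀`, `S_{k+1} = S_k + α⁻¹ S_k (α*)⁻¹ + α⁻¹ Λ_k j Λ_k* (α*)⁻¹`. -/
def SSeq {n m1 m2 : ℕ} (α S₀ : Matrix (Fin n) (Fin n) ℂ)
    (ϑ1 : Matrix (Fin n) (Fin m1) ℂ) (ϑ2 : Matrix (Fin n) (Fin m2) ℂ) :
    ℕ → Matrix (Fin n) (Fin n) ℂ
  | 0 => S₀
  | k + 1 => SSeq α S₀ ϑ1 ϑ2 k + α⁻¹ * SSeq α S₀ ϑ1 ϑ2 k * (αᴴ)⁻¹ +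
      α⁻¹ * (LamSeq α ϑ1 ϑ2 k * jmat m1 m2 * (LamSeq α ϑ1 ϑ2 k)ᴴ) * (αᴴ)⁻¹

/-- The generated potential `C_k = j + Λ_k* S_k⁻¹ Λ_k − Λ_{k+1}* S_{k+1}⁻¹ Λ_{k+1}`. -/
def CSeq {n m1 m2 : ℕ} (α S₀ : Matrix (Fin n) (Fin n) ℂ)
    (ϑ1 : Matrix (Fin n) (Fin m1) ℂ) (ϑ2 : Matrix (Fin n) (Fin m2) ℂ) (k : ℕ) :
    Matrix (Fin m1 ⊕ Fin m2) (Fin m1 ⊕ Fin m2) ℂ :=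
  jmat m1 m2 + (LamSeq α ϑ1 ϑ2 k)ᴴ * (SSeq α S₀ ϑ1 ϑ2 k)⁻¹ * LamSeq α ϑ1 ϑ2 k -
    (LamSeq α ϑ1 ϑ2 (k + 1))ᴴ * (SSeq α S₀ ϑ1 ϑ2 (k + 1))⁻¹ * LamSeq α ϑ1 ϑ2 (k + 1)

lemma jmat_conjTranspose (m1 m2 : ℕ) : (jmat m1 m2)ᴴ = jmat m1 m2 := by
  simp [jmat, fromBlocks_conjTranspose]

lemma jmat_mul_jmat (m1 m2 : ℕ) : jmat m1 m2 * jmat m1 m2 = 1 := by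
  simp [jmat, fromBlocks_multiply, ← fromBlocks_one]

def qmat (m1 m2 : ℕ) : Matrix (Fin m1 ⊕ Fin m2) (Fin m1 ⊕ Fin m2) ℂ :=
  Matrix.fromBlocks (((Real.sqrt 2 : ℝ) : ℂ) • 1) 0 0 0

lemma qmat_mul_qmatH (m1 m2 : ℕ) : qmat m1 m2 * (qmat m1 m2)ᴴ = jmat m1 m2 + 1 := by
  have h2 : ((Real.sqrt 2 : ℝ) : ℂ) * ((Real.sqrt 2 : ℝ) : ℂ) = 2 := by
    rw [← Complex.ofReal_mul, Real.mul_self_sqrt (by norm_num)]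
    norm_num
  have h1 : ((1 : Matrix (Fin m1) (Fin m1) ℂ) + 1) = (2 : ℂ) • 1 := by
    rw [two_smul]
  simp [qmat, jmat, fromBlocks_conjTranspose, fromBlocks_multiply, ← fromBlocks_one,
    fromBlocks_add, smul_smul, Complex.star_def, Complex.conj_ofReal, h2, h1]
  module

lemma posDef_mul_mul_conjTranspose {N : Type*} [Fintype N] [DecidableEq N]
    {A M : Matrix N N ℂ} (hA : A.PosDef) (hM : IsUnit M) :
    (M * A * Mᴴ).PosDef := by
  refine Matrix.PosDef.of_dotProduct_mulVec_pos ?_ (fun x hx => ?_)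
  · simp [Matrix.IsHermitian, conjTranspose_mul, hA.1.eq, Matrix.mul_assoc]
  · have hMH : IsUnit Mᴴ := by
      rwa [← Matrix.isUnit_conjTranspose] at hM
    have hinj := Matrix.mulVec_injective_iff_isUnit.mpr hMH
    have hy : Mᴴ *ᵥ x ≠ 0 := fun h => hx (hinj (h.trans (Matrix.mulVec_zero _).symm))
    have h2 : M * A * Mᴴ = (Mᴴ)ᴴ * A * Mᴴ := by rw [conjTranspose_conjTranspose]
    rw [h2]
    simpa only [star_mulVec, dotProduct_mulVec, vecMul_vecMul] using hA.dotProduct_mulVec_pos hy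

lemma key_identity {n m1 m2 : ℕ}
    (α S₀ : Matrix (Fin n) (Fin n) ℂ)
    (ϑ1 : Matrix (Fin n) (Fin m1) ℂ) (ϑ2 : Matrix (Fin n) (Fin m2) ℂ)
    (hadm : Admissible α S₀ ϑ1 ϑ2) (hd : IsUnit α.det) :
    ∀ k : ℕ, α * SSeq α S₀ ϑ1 ϑ2 k - SSeq α S₀ ϑ1 ϑ2 k * αᴴ =
      Complex.I • (LamSeq α ϑ1 ϑ2 k * (LamSeq α ϑ1 ϑ2 k)ᴴ) := by
  have hdH : IsUnit αᴴ.det := by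
    rw [Matrix.det_conjTranspose]; exact hd.star
  have hBH : (α⁻¹)ᴴ = (αᴴ)⁻¹ := Matrix.conjTranspose_nonsing_inv α
  intro k
  induction k with
  | zero =>
      simpa [SSeq, LamSeq, conjTranspose_fromCols_eq_fromRows_conjTranspose,
        fromCols_mul_fromRows] using hadm.2
  | succ k ih =>
      set S := SSeq α S₀ ϑ1 ϑ2 k with hS
      set L := LamSeq α ϑ1 ϑ2 k with hL
      set J := jmat m1 m2 with hJ
      have hderived : S * (αᴴ)⁻¹ - α⁻¹ * S = Complex.I • (α⁻¹ * (L * Lᴴ) * (αᴴ)⁻¹) := by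
        have := congrArg (fun X => α⁻¹ * X * (αᴴ)⁻¹) ih
        simpa [Matrix.mul_sub, Matrix.sub_mul, Matrix.mul_assoc,
          Matrix.nonsing_inv_mul_cancel_left _ _ hd,
          Matrix.mul_nonsing_inv_cancel_left _ _ hdH,
          Matrix.mul_nonsing_inv _ hdH, Matrix.nonsing_inv_mul _ hd,
          Matrix.mul_smul, Matrix.smul_mul] using this
      have hJH : Jᴴ = J := by rw [hJ, jmat_conjTranspose]
      have hJJ : ∀ (p : ℕ) (X : Matrix (Fin m1 ⊕ Fin m2) (Fin p) ℂ), J * (J * X) = X := by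
        intro p X; rw [← Matrix.mul_assoc, hJ, jmat_mul_jmat, Matrix.one_mul]
      rw [sub_eq_iff_eq_add] at ih hderived
      show α * (S + α⁻¹ * S * (αᴴ)⁻¹ + α⁻¹ * (L * J * Lᴴ) * (αᴴ)⁻¹)
          - (S + α⁻¹ * S * (αᴴ)⁻¹ + α⁻¹ * (L * J * Lᴴ) * (αᴴ)⁻¹) * αᴴ
        = Complex.I • ((L + Complex.I • (α⁻¹ * L * J)) * (L + Complex.I • (α⁻¹ * L * J))ᴴ)
      simp only [conjTranspose_add, conjTranspose_smul, conjTranspose_mul, hBH,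
        hJH, Complex.star_def, Complex.conj_I,
        Matrix.mul_add, Matrix.add_mul, Matrix.sub_mul, Matrix.mul_sub,
        Matrix.mul_smul, Matrix.smul_mul, Matrix.mul_assoc,
        Matrix.mul_nonsing_inv_cancel_left _ _ hd,
        Matrix.nonsing_inv_mul _ hdH, Matrix.mul_one, hJJ] at ih hderived ⊢
      simp only [smul_smul, mul_neg, neg_mul, Complex.I_mul_I, neg_neg, one_smul, neg_smul,
        smul_add, smul_neg, Matrix.smul_mul, Matrix.mul_smul] at ih hderived ⊢
      rw [ih, hderived]
      module

/-- If `0, i ∉ σ(α)`, all the matrices `S_k` are positive definite, so the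
admissible quadruple generates a well-defined potential `{C_k}`. -/
theorem SSeq_posDef {n m1 m2 : ℕ}
    (α S₀ : Matrix (Fin n) (Fin n) ℂ)
    (ϑ1 : Matrix (Fin n) (Fin m1) ℂ) (ϑ2 : Matrix (Fin n) (Fin m2) ℂ)
    (hadm : Admissible α S₀ ϑ1 ϑ2)
    (h0 : (0 : ℂ) ∉ spectrum ℂ α) (hi : Complex.I ∉ spectrum ℂ α) :
    ∀ k : ℕ, (SSeq α S₀ ϑ1 ϑ2 k).PosDef := by
  have hα : IsUnit α := spectrum.zero_notMem_iff ℂ |>.mp h0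
  have hd : IsUnit α.det := (Matrix.isUnit_iff_isUnit_det α).mp hα
  have hdH : IsUnit αᴴ.det := by rw [Matrix.det_conjTranspose]; exact hd.star
  have hBH : (α⁻¹)ᴴ = (αᴴ)⁻¹ := Matrix.conjTranspose_nonsing_inv α
  -- the multiplier M = 1 - i α⁻¹ is invertible
  have hM : IsUnit ((1 : Matrix (Fin n) (Fin n) ℂ) - Complex.I • α⁻¹) := by
    have h1 : (1 : Matrix (Fin n) (Fin n) ℂ) - Complex.I • α⁻¹
        = α⁻¹ * (α - Complex.I • 1) := by
      rw [Matrix.mul_sub, Matrix.nonsing_inv_mul _ hd, Matrix.mul_smul, Matrix.mul_one]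
    have h2 : IsUnit (α - Complex.I • (1 : Matrix (Fin n) (Fin n) ℂ)) := by
      have := spectrum.notMem_iff.mp hi
      rw [Algebra.algebraMap_eq_smul_one] at this
      simpa [neg_sub] using this.neg
    rw [h1]
    exact (Matrix.isUnit_nonsing_inv_iff.mpr hα).mul h2
  intro k
  induction k with
  | zero => exact hadm.1
  | succ k ih =>
      set S := SSeq α S₀ ϑ1 ϑ2 k with hS
      set L := LamSeq α ϑ1 ϑ2 k with hL
      set J := jmat m1 m2 with hJ
      set Q := qmat m1 m2 with hQ
      have hderived : S * (αᴴ)⁻¹ - α⁻¹ * S = Complex.I • (α⁻¹ * (L * Lᴴ) * (αᴴ)⁻¹) := by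
        have := congrArg (fun X => α⁻¹ * X * (αᴴ)⁻¹)
          (key_identity α S₀ ϑ1 ϑ2 hadm hd k)
        simpa [← hS, ← hL, Matrix.mul_sub, Matrix.sub_mul, Matrix.mul_assoc,
          Matrix.nonsing_inv_mul_cancel_left _ _ hd,
          Matrix.mul_nonsing_inv_cancel_left _ _ hdH,
          Matrix.mul_nonsing_inv _ hdH, Matrix.nonsing_inv_mul _ hd,
          Matrix.mul_smul, Matrix.smul_mul] using this
      have hQQ : ∀ (p : ℕ) (X : Matrix (Fin m1 ⊕ Fin m2) (Fin p) ℂ),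
          Q * (Qᴴ * X) = J * X + X := by
        intro p X
        rw [← Matrix.mul_assoc, hQ, qmat_mul_qmatH, Matrix.add_mul, Matrix.one_mul, hJ]
      have hsplit : SSeq α S₀ ϑ1 ϑ2 (k + 1)
          = ((1 : Matrix (Fin n) (Fin n) ℂ) - Complex.I • α⁻¹) * S
              * ((1 : Matrix (Fin n) (Fin n) ℂ) - Complex.I • α⁻¹)ᴴ
            + (α⁻¹ * (L * Q)) * (α⁻¹ * (L * Q))ᴴ := by
        rw [sub_eq_iff_eq_add] at hderived
        show S + α⁻¹ * S * (αᴴ)⁻¹ + α⁻¹ * (L * J * Lᴴ) * (αᴴ)⁻¹ = _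
        simp only [conjTranspose_sub, conjTranspose_smul, conjTranspose_mul, hBH,
          conjTranspose_one, Complex.star_def, Complex.conj_I,
          Matrix.mul_add, Matrix.add_mul, Matrix.sub_mul, Matrix.mul_sub,
          Matrix.mul_smul, Matrix.smul_mul, Matrix.mul_assoc, Matrix.mul_one,
          Matrix.one_mul, hQQ] at hderived ⊢
        simp only [smul_smul, mul_neg, neg_mul, Complex.I_mul_I, neg_neg, one_smul, neg_smul,
          smul_add, smul_neg, sub_neg_eq_add, Matrix.smul_mul, Matrix.mul_smul]
          at hderived ⊢
        simp only [hderived, Matrix.mul_add, Matrix.add_mul, Matrix.mul_smul, Matrix.smul_mul,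
          smul_smul, smul_sub, smul_add, Complex.I_mul_I, neg_smul, one_smul, neg_neg,
          sub_neg_eq_add, mul_neg, neg_mul, smul_neg, Matrix.mul_assoc]
        module
      rw [hsplit]
      exact (posDef_mul_mul_conjTranspose ih hM).add_posSemidef
        (posSemidef_self_mul_conjTranspose _)

end
end

section
/- Let α be an n×n complex matrix and ϑ an n×m complex matrix such that the pair {α, ϑ} is controllable. Then the n×n matrix Σ_{ℓ=1}^{n} (α − i I_n)^{n−ℓ} (α + i I_n)^{ℓ−1} ϑ ϑ* (α* − i I_n)^{ℓ−1} (α* + i I_n)^{n−ℓ} is Hermitian positive definite. -/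
open Matrix Filter
open scoped ComplexOrder

noncomputable section

private lemma sum_mulVec' {ι N : Type*} [Fintype N] [DecidableEq N] (s : Finset ι)
    (f : ι → Matrix N N ℂ) (v : N → ℂ) :
    (∑ j ∈ s, f j) *ᵥ v = ∑ j ∈ s, f j *ᵥ v := by
  classical
  induction s using Finset.induction with
  | empty => simp
  | insert _ _ h ih => simp [Finset.sum_insert h, Matrix.add_mulVec, ih]

private lemma dotProduct_sum' {ι N : Type*} [Fintype N] (s : Finset ι)
    (u : N → ℂ) (f : ι → N → ℂ) :
    u ⬝ᵥ (∑ j ∈ s, f j) = ∑ j ∈ s, u ⬝ᵥ f j := by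
  classical
  induction s using Finset.induction with
  | empty => simp
  | insert _ _ h ih => simp [Finset.sum_insert h, dotProduct_add, ih]

private lemma mulVec_sum' {ι N M : Type*} [Fintype N] [Fintype M] (s : Finset ι)
    (T : Matrix M N ℂ) (f : ι → N → ℂ) :
    T *ᵥ (∑ j ∈ s, f j) = ∑ j ∈ s, T *ᵥ f j := by
  classical
  induction s using Finset.induction with
  | empty => simp
  | insert _ _ h ih => simp [Finset.sum_insert h, Matrix.mulVec_add, ih]

/-- For a controllable pair `{α, ϑ}`, the matrix
`Σ_{ℓ=1}^n (α − iI)^{n−ℓ} (α + iI)^{ℓ−1} ϑ ϑ* (α* − iI)^{ℓ−1} (α* + iI)^{n−ℓ}`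
is positive definite. -/
theorem sum_posDef_of_controllable {n m : ℕ}
    (α : Matrix (Fin n) (Fin n) ℂ) (ϑ : Matrix (Fin n) (Fin m) ℂ)
    (hc : Controllable α ϑ) :
    (∑ ℓ ∈ Finset.range n,
      (α - Complex.I • 1) ^ (n - 1 - ℓ) * (α + Complex.I • 1) ^ ℓ * ϑ * ϑᴴ *
        (αᴴ - Complex.I • 1) ^ ℓ * (αᴴ + Complex.I • 1) ^ (n - 1 - ℓ)).PosDef := by
  classical
  set A : Matrix (Fin n) (Fin n) ℂ := αᴴ - Complex.I • 1 with hA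
  set B : Matrix (Fin n) (Fin n) ℂ := αᴴ + Complex.I • 1 with hB
  set N : ℕ → Matrix (Fin n) (Fin n) ℂ :=
    fun ℓ => (α - Complex.I • 1) ^ (n - 1 - ℓ) * (α + Complex.I • 1) ^ ℓ with hN
  have hNH : ∀ ℓ, (N ℓ * ϑ)ᴴ = ϑᴴ * A ^ ℓ * B ^ (n - 1 - ℓ) := by
    intro ℓ
    have h1 : (α + Complex.I • 1)ᴴ = A := by
      simp [hA, conjTranspose_add, conjTranspose_smul, Complex.star_def, Complex.conj_I,
        sub_eq_add_neg, neg_smul]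
    have h2 : (α - Complex.I • 1)ᴴ = B := by
      simp [hB, conjTranspose_sub, conjTranspose_smul, Complex.star_def, Complex.conj_I,
        sub_eq_add_neg, neg_smul]
    simp [hN, conjTranspose_mul, conjTranspose_pow, h1, h2, Matrix.mul_assoc]
  have hterm : ∀ ℓ,
      (α - Complex.I • 1) ^ (n - 1 - ℓ) * (α + Complex.I • 1) ^ ℓ * ϑ * ϑᴴ *
        (αᴴ - Complex.I • 1) ^ ℓ * (αᴴ + Complex.I • 1) ^ (n - 1 - ℓ)
      = (N ℓ * ϑ) * (N ℓ * ϑ)ᴴ := by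
    intro ℓ
    rw [hNH ℓ]
    simp [hN, Matrix.mul_assoc, hA, hB]
  have hpsd : ∀ ℓ, ((N ℓ * ϑ) * (N ℓ * ϑ)ᴴ).PosSemidef :=
    fun ℓ => posSemidef_self_mul_conjTranspose _
  have hS : (∑ ℓ ∈ Finset.range n,
      (α - Complex.I • 1) ^ (n - 1 - ℓ) * (α + Complex.I • 1) ^ ℓ * ϑ * ϑᴴ *
        (αᴴ - Complex.I • 1) ^ ℓ * (αᴴ + Complex.I • 1) ^ (n - 1 - ℓ)).PosSemidef := by
    rw [Finset.sum_congr rfl fun ℓ _ => hterm ℓ]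
    exact Finset.sum_induction _ _ (fun a b ha hb => ha.add hb) .zero fun ℓ _ => hpsd ℓ
  refine posDef_iff_dotProduct_mulVec.mpr ⟨hS.1, fun x hx => lt_of_le_of_ne (hS.dotProduct_mulVec_nonneg x) (Ne.symm fun heq => hx ?_)⟩
  -- From the quadratic form being zero, each term's quadratic form is zero.
  set y : ℕ → Fin m → ℂ := fun ℓ => (N ℓ * ϑ)ᴴ *ᵥ x with hy
  have hq : ∀ ℓ, star x ⬝ᵥ ((N ℓ * ϑ) * (N ℓ * ϑ)ᴴ) *ᵥ x = star (y ℓ) ⬝ᵥ y ℓ := by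
    intro ℓ
    rw [← Matrix.mulVec_mulVec, Matrix.dotProduct_mulVec, hy]
    congr 1
    rw [Matrix.star_mulVec, conjTranspose_conjTranspose]
  have hy0 : ∀ ℓ < n, y ℓ = 0 := by
    have hsum : ∑ ℓ ∈ Finset.range n, star (y ℓ) ⬝ᵥ y ℓ = 0 := by
      rw [← heq, Finset.sum_congr rfl fun ℓ _ => hterm ℓ, sum_mulVec', dotProduct_sum']
      exact Finset.sum_congr rfl fun ℓ _ => (hq ℓ).symm
    intro ℓ hℓ
    have := (Finset.sum_eq_zero_iff_of_nonneg
      (fun ℓ _ => dotProduct_star_self_nonneg (y ℓ))).mp hsum ℓ (Finset.mem_range.mpr hℓ)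
    exact dotProduct_star_self_eq_zero.mp this
  -- So ϑᴴ (A^ℓ B^(n-1-ℓ)) x = 0 for ℓ < n.
  have h0 : ∀ ℓ < n, ϑᴴ *ᵥ ((A ^ ℓ * B ^ (n - 1 - ℓ)) *ᵥ x) = 0 := by
    intro ℓ hℓ
    rw [Matrix.mulVec_mulVec, ← Matrix.mul_assoc, ← hNH ℓ]
    exact hy0 ℓ hℓ
  have hn : 0 < n := by
    rcases Nat.eq_zero_or_pos n with h | h
    · exfalso; apply hx; subst h; ext i; exact absurd i.2 (Nat.not_lt_zero _)
    · exact h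
  -- A and B commute, and B = A + (2i) • 1.
  have hcomm : Commute A B := by
    have hc1 : ∀ M : Matrix (Fin n) (Fin n) ℂ,
        (Complex.I • (1 : Matrix (Fin n) (Fin n) ℂ)) * M = M * (Complex.I • 1) := by
      intro M
      rw [Matrix.smul_mul, Matrix.mul_smul, Matrix.one_mul, Matrix.mul_one]
    show A * B = B * A
    rw [hA, hB, sub_mul, mul_sub, mul_add, add_mul, hc1 αᴴ, hc1 (αᴴ + Complex.I • 1)]
  have hBA : B = A + (2 * Complex.I) • 1 := by
    rw [hA, hB]
    ext i j
    simp [Matrix.add_apply, Matrix.sub_apply, Matrix.smul_apply]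
    ring
  -- Downward induction: ϑᴴ (A^j B^s) x = 0 whenever j + s ≤ n - 1.
  have key : ∀ d j s, j + s + d = n - 1 → ϑᴴ *ᵥ ((A ^ j * B ^ s) *ᵥ x) = 0 := by
    intro d
    induction d with
    | zero =>
      intro j s hjs
      have hj : j < n := by omega
      have hs : s = n - 1 - j := by omega
      rw [hs]
      exact h0 j hj
    | succ d ih =>
      intro j s hjs
      have h1 := ih j (s + 1) (by omega)
      have h2 := ih (j + 1) s (by omega)
      have hid : A ^ j * B ^ (s + 1) = A ^ (j + 1) * B ^ s + (2 * Complex.I) • (A ^ j * B ^ s) := by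
        have hba : B ^ s * A = A * B ^ s := ((hcomm.symm).pow_left s)
        calc A ^ j * B ^ (s + 1) = A ^ j * B ^ s * B := by rw [pow_succ, Matrix.mul_assoc]
          _ = A ^ j * B ^ s * (A + (2 * Complex.I) • 1) := by rw [← hBA]
          _ = A ^ j * (B ^ s * A) + (2 * Complex.I) • (A ^ j * B ^ s) := by
              rw [mul_add, Matrix.mul_assoc]
              congr 1
              rw [Matrix.mul_smul, Matrix.mul_one]
          _ = A ^ (j + 1) * B ^ s + (2 * Complex.I) • (A ^ j * B ^ s) := by
              rw [hba, ← Matrix.mul_assoc, ← pow_succ]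
      rw [hid, Matrix.add_mulVec, Matrix.smul_mulVec, Matrix.mulVec_add,
        Matrix.mulVec_smul, h2, zero_add] at h1
      have h2i : (2 * Complex.I) ≠ 0 := by
        simp [Complex.I_ne_zero]
      exact (smul_eq_zero.mp h1).resolve_left h2i
  -- Hence ϑᴴ (αᴴ)^k x = 0 for all k < n.
  have hpow : ∀ k < n, ϑᴴ *ᵥ ((αᴴ ^ k) *ᵥ x) = 0 := by
    intro k hk
    have hAB : A + B = (2 : ℂ) • αᴴ := by
      rw [hA, hB]
      ext i j
      simp [Matrix.add_apply, Matrix.sub_apply, Matrix.smul_apply]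
      ring
    have hsum : ϑᴴ *ᵥ (((A + B) ^ k) *ᵥ x) = 0 := by
      rw [hcomm.add_pow, sum_mulVec', mulVec_sum']
      refine Finset.sum_eq_zero fun j hj => ?_
      have hj' : j ≤ k := Nat.lt_succ_iff.mp (Finset.mem_range.mp hj)
      rw [← Matrix.mulVec_mulVec, Matrix.natCast_mulVec, Matrix.mulVec_smul, Matrix.mulVec_smul,
        key (n - 1 - k) j (k - j) (by omega), smul_zero]
    rw [hAB, smul_pow, Matrix.smul_mulVec, Matrix.mulVec_smul] at hsum
    have h2k : ((2 : ℂ) ^ k) ≠ 0 := pow_ne_zero _ two_ne_zero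
    exact (smul_eq_zero.mp hsum).resolve_left h2k
  -- Controllability forces x = 0.
  have horth : ∀ v ∈ {v : Fin n → ℂ | ∃ k < n, ∃ c : Fin m, v = fun r => (α ^ k * ϑ) r c},
      v ⬝ᵥ star x = 0 := by
    rintro v ⟨k, hk, c, rfl⟩
    have h1 : (ϑᴴ * αᴴ ^ k) *ᵥ x = 0 := by
      rw [← Matrix.mulVec_mulVec]; exact hpow k hk
    have h2 : ((α ^ k * ϑ)ᴴ) *ᵥ x = 0 := by
      rw [conjTranspose_mul, conjTranspose_pow]; exact h1
    have h3 := congrFun h2 c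
    have h4 : ∑ r, star ((α ^ k * ϑ) r c) * x r = 0 := by
      simpa [Matrix.mulVec, dotProduct, Matrix.conjTranspose_apply] using h3
    have h5 := congrArg star h4
    simp only [star_sum, star_mul', star_star, star_zero] at h5
    show ∑ r, (α ^ k * ϑ) r c * star (x r) = 0
    exact h5
  have hall : ∀ v ∈ Submodule.span ℂ
      {v : Fin n → ℂ | ∃ k < n, ∃ c : Fin m, v = fun r => (α ^ k * ϑ) r c},
      v ⬝ᵥ star x = 0 := by
    intro v hv
    refine Submodule.span_induction (p := fun v _ => v ⬝ᵥ star x = 0)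
      (fun w hw => horth w hw) ?_ ?_ ?_ hv
    · simp
    · intro a b _ _ ha hb; rw [add_dotProduct, ha, hb, add_zero]
    · intro c a _ ha; rw [smul_dotProduct, ha, smul_zero]
  have hx0 : x ⬝ᵥ star x = 0 := hall x (by rw [hc]; trivial)
  exact dotProduct_self_star_eq_zero.mp hx0

end
end

section
/- Let α be an n×n complex matrix such that i ∉ σ(α) (so α − i I_n is invertible; note (α − i I_n)* = α* + i I_n is then invertible too) and such that −i(α − α*) is positive semidefinite (equivalently, α − α* = iP for some positive semidefinite P). Then the matrix (α − i I_n)^{−1} (α + i I_n) (α* − i I_n) (α* + i I_n)^{−1} − I_n is positive semidefinite. -/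
open Matrix Filter
open scoped ComplexOrder

noncomputable section

/-- If `i ∉ σ(α)` and `−i(α − α*) ≥ 0`, then
`(α − iI)⁻¹ (α + iI) (α* − iI) (α* + iI)⁻¹ − I ≥ 0`. -/
theorem cayley_product_posSemidef {n : ℕ} (α : Matrix (Fin n) (Fin n) ℂ)
    (hi : Complex.I ∉ spectrum ℂ α)
    (hps : ((-Complex.I) • (α - αᴴ)).PosSemidef) :
    ((α - Complex.I • 1)⁻¹ * (α + Complex.I • 1) * (αᴴ - Complex.I • 1) *
      (αᴴ + Complex.I • 1)⁻¹ - 1).PosSemidef := by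
  set A : Matrix (Fin n) (Fin n) ℂ := α - Complex.I • 1 with hAdef
  have hA : IsUnit A := by
    rw [spectrum.mem_iff, not_not] at hi
    have h : algebraMap ℂ (Matrix (Fin n) (Fin n) ℂ) Complex.I = Complex.I • 1 :=
      Algebra.algebraMap_eq_smul_one _
    rw [h] at hi
    simpa [hAdef] using hi.neg
  haveI hAinv : Invertible A := hA.invertible
  have hAH : Aᴴ = αᴴ + Complex.I • 1 := by
    simp [hAdef, sub_eq_add_neg, conjTranspose_smul, Complex.conj_I]
  haveI hAHinv : Invertible Aᴴ :=
    ((isUnit_iff_isUnit_det _).2 (by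
      rw [det_conjTranspose]; exact ((isUnit_iff_isUnit_det _).1 hA).star)).invertible
  have key : (α + Complex.I • 1) * (αᴴ - Complex.I • 1) - A * Aᴴ =
      (-Complex.I) • (α - αᴴ) + (-Complex.I) • (α - αᴴ) := by
    rw [hAH, hAdef]
    simp only [mul_add, add_mul, mul_sub, sub_mul, smul_mul_assoc, mul_smul_comm,
      smul_smul, Complex.I_mul_I, one_mul, mul_one, smul_sub, smul_add, neg_smul,
      neg_one_smul]
    abel
  have heq : A⁻¹ * (α + Complex.I • 1) * (αᴴ - Complex.I • 1) * (αᴴ + Complex.I • 1)⁻¹ - 1 =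
      A⁻¹ * ((-Complex.I) • (α - αᴴ) + (-Complex.I) • (α - αᴴ)) * A⁻¹ᴴ := by
    rw [conjTranspose_nonsing_inv, hAH]
    have h2 : A⁻¹ * (A * Aᴴ) * (αᴴ + Complex.I • 1)⁻¹ = 1 := by
      rw [← hAH, ← Matrix.mul_assoc, Matrix.inv_mul_of_invertible, Matrix.one_mul,
        Matrix.mul_inv_of_invertible]
    have h3 : A⁻¹ * ((α + Complex.I • 1) * (αᴴ - Complex.I • 1)) * (αᴴ + Complex.I • 1)⁻¹ -
        A⁻¹ * (A * Aᴴ) * (αᴴ + Complex.I • 1)⁻¹ =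
        A⁻¹ * ((-Complex.I) • (α - αᴴ) + (-Complex.I) • (α - αᴴ)) * (αᴴ + Complex.I • 1)⁻¹ := by
      rw [← Matrix.sub_mul, ← Matrix.mul_sub, key]
    rw [← h3, h2]
    simp only [Matrix.mul_assoc]
  rw [heq]
  exact (hps.add hps).mul_mul_conjTranspose_same A⁻¹

end
end
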